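/- Let (G,X) be a strongly marked group with Property D. Let x, y ∈ X with x ≠ y, a, b nonzero exponents, and m ≥ 3 even. If xy ≠ yx, \overline{[x^a,y^b]}_m = \overline{[y^b,x^a]}_m and lg_{S(X)}(\overline{[x^a,y^b]}_m) = m, then o(x) = o(y) = 2 and a = b = 1. -/

import Mathlib

namespace Paper

/-- The alternating list `(a, b, a, b, ...)` of length `m`. -/
def altList {α : Type*} (a b : α) : ℕ → List α
  | 0 => []
  | n + 1 => a :: altList b a n

/-- The alternating product `a b a ⋯` of length `m` in a monoid. -/
def altProd {G : Type*} [Monoid G] (a b : G) (m : ℕ) : G := (altList a b m).prod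

variable {G : Type*} [Group G]

/-- The set of syllables of a generating set `X`: nontrivial powers of elements of `X`. -/
def Syll (X : Set G) : Set G := {s | ∃ x ∈ X, ∃ a : ℤ, s = x ^ a ∧ s ≠ 1}

/-- A syllabic word: a list all of whose entries are syllables. -/
def SylWord (X : Set G) (w : List G) : Prop := ∀ s ∈ w, s ∈ Syll X

/-- The syllabic length of an element: minimal length of a syllabic word representing it. -/
noncomputable def sylLen (X : Set G) (g : G) : ℕ :=
  sInf {n | ∃ w : List G, SylWord X w ∧ w.prod = g ∧ w.length = n}

/-- A syllabic word is reduced if its length is the syllabic length of the element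
it represents. -/
def Reduced (X : Set G) (w : List G) : Prop :=
  SylWord X w ∧ w.length = sylLen X w.prod

/-- Elementary M-operation of type I. -/
def MOpI (X : Set G) (w w' : List G) : Prop :=
  ∃ (w₁ w₂ : List G) (s t : G), s ∈ Syll X ∧ t ∈ Syll X ∧
    w = w₁ ++ [s, t] ++ w₂ ∧
    ((s * t ∈ Syll X ∧ w' = w₁ ++ [s * t] ++ w₂) ∨ (s * t = 1 ∧ w' = w₁ ++ w₂))

/-- Elementary M-operation of type II. -/
def MOpII (X : Set G) (w w' : List G) : Prop :=
  ∃ (w₁ w₂ : List G) (s t : G) (m : ℕ), s ∈ Syll X ∧ t ∈ Syll X ∧ 2 ≤ m ∧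
    altProd s t m = altProd t s m ∧ sylLen X (altProd s t m) = m ∧
    w = w₁ ++ altList s t m ++ w₂ ∧ w' = w₁ ++ altList t s m ++ w₂

/-- Elementary M-operation (of type I or type II). -/
def MOp (X : Set G) (w w' : List G) : Prop := MOpI X w w' ∨ MOpII X w w'

/-- A syllabic word is M-reduced if its length cannot be shortened by any finite
sequence of elementary M-operations. -/
def MReduced (X : Set G) (w : List G) : Prop :=
  ∀ w', Relation.ReflTransGen (MOp X) w w' → ¬ w'.length < w.length

/-- Property D: a syllabic word is reduced iff it is M-reduced, and any two reduced
syllabic words representing the same element are connected by a finite sequence of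
elementary M-operations of type II. -/
def PropertyD (X : Set G) : Prop :=
  (∀ w : List G, SylWord X w → (Reduced X w ↔ MReduced X w)) ∧
  (∀ w w' : List G, Reduced X w → Reduced X w' → w.prod = w'.prod →
    Relation.ReflTransGen (MOpII X) w w')

/-- `(G, X)` is a marked group: `X` generates `G`. -/
def Marked (X : Set G) : Prop := Subgroup.closure X = ⊤

/-- `(G, X)` is a strongly marked group. -/
def StronglyMarked (X : Set G) : Prop :=
  Marked X ∧ (1 : G) ∉ X ∧
    ∀ x ∈ X, ∀ y ∈ X, ∀ a b : ℤ, x ^ a ≠ 1 → y ^ b ≠ 1 →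
      (x ^ a * y ^ b ∈ Syll X ∨ x ^ a * y ^ b = 1) → x = y

/-- The data of a Dyer graph: a simplicial graph with edge labels `m ≥ 2` and vertex
labels `f ∈ ℕ_{≥2} ∪ {∞}` such that any edge with `m(e) ≠ 2` has both endpoints
labelled `2`. -/
structure DyerData (V : Type*) where
  adj : V → V → Prop
  symm : ∀ u v, adj u v → adj v u
  loopless : ∀ v, ¬ adj v v
  m : V → V → ℕ
  m_symm : ∀ u v, m u v = m v u
  m_two_le : ∀ u v, adj u v → 2 ≤ m u v
  f : V → ℕ∞
  f_two_le : ∀ v, 2 ≤ f v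
  dyer : ∀ u v, adj u v → m u v ≠ 2 → f u = 2 ∧ f v = 2

/-- The defining relators of the Dyer group of `Δ`. -/
def DyerData.rels {V : Type*} (Δ : DyerData V) : Set (FreeGroup V) :=
  {r | ∃ v, Δ.f v ≠ ⊤ ∧ r = (FreeGroup.of v) ^ (Δ.f v).toNat} ∪
  {r | ∃ u v, Δ.adj u v ∧
    r = altProd (FreeGroup.of u) (FreeGroup.of v) (Δ.m u v) *
        (altProd (FreeGroup.of v) (FreeGroup.of u) (Δ.m u v))⁻¹}

/-- The Dyer group of the data `Δ`. -/
abbrev DyerGroup {V : Type*} (Δ : DyerData V) := PresentedGroup Δ.rels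

/-- The standard generating set of a Dyer group. -/
def DyerGens {V : Type*} (Δ : DyerData V) : Set (DyerGroup Δ) :=
  Set.range (PresentedGroup.of (rels := Δ.rels))



section AuxLemmas

variable {G : Type*} [Group G] {X : Set G}

@[simp] theorem altList_zero {α : Type*} (a b : α) : altList a b 0 = [] := rfl

theorem altList_length {α : Type*} (a b : α) (n : ℕ) : (altList a b n).length = n := by
  induction n generalizing a b with
  | zero => rfl
  | succ n ih => simp [altList, ih]

theorem altList_cons {α : Type*} (a b : α) (n : ℕ) :
    altList a b (n + 1) = a :: altList b a n := rfl

theorem altList_two_add {α : Type*} (a b : α) (n : ℕ) :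
    altList a b (n + 2) = a :: b :: altList a b n := rfl

theorem altList_concat {α : Type*} (a b : α) (n : ℕ) :
    altList a b (n + 1) = altList a b n ++ [if Even n then a else b] := by
  induction n generalizing a b with
  | zero => simp [altList]
  | succ n ih =>
    rw [altList_cons, altList_cons a b n, ih]
    by_cases h : Even n <;> simp [h, Nat.even_add_one, List.cons_append]

theorem altList_drop {α : Type*} (a b : α) (n k : ℕ) :
    (altList a b n).drop k =
      altList (if Even k then a else b) (if Even k then b else a) (n - k) := by
  induction k generalizing a b n with
  | zero => simp
  | succ k ih =>
    cases n with
    | zero => simp [altList]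
    | succ n =>
      rw [altList_cons, List.drop_succ_cons, ih b a n]
      by_cases h : Even k <;> simp [h, Nat.even_add_one, Nat.succ_sub_succ]

theorem altList_take {α : Type*} (a b : α) {n k : ℕ} (h : k ≤ n) :
    (altList a b n).take k = altList a b k := by
  induction k generalizing a b n with
  | zero => rfl
  | succ k ih =>
    cases n with
    | zero => omega
    | succ n =>
      rw [altList_cons, List.take_succ_cons, ih b a (show k ≤ n by omega), altList_cons]

theorem mem_altList {α : Type*} {a b c : α} {n : ℕ} (h : c ∈ altList a b n) :
    c = a ∨ c = b := by
  induction n generalizing a b with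
  | zero => simp [altList] at h
  | succ n ih =>
    rw [altList_cons] at h
    rcases List.mem_cons.mp h with h | h
    · exact Or.inl h
    · exact (ih h).symm

theorem altList_inj {α : Type*} {a b a' b' : α} {k : ℕ} (hk : 2 ≤ k)
    (h : altList a b k = altList a' b' k) : a = a' ∧ b = b' := by
  obtain ⟨j, rfl⟩ : ∃ j, k = j + 2 := ⟨k - 2, by omega⟩
  rw [altList_two_add, altList_two_add] at h
  exact ⟨(List.cons.injEq _ _ _ _).mp h |>.1,
    ((List.cons.injEq _ _ _ _).mp ((List.cons.injEq _ _ _ _).mp h).2).1⟩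

theorem altProd_cons (a b : G) (n : ℕ) : altProd a b (n + 1) = a * altProd b a n := by
  simp [altProd, altList_cons]

theorem altProd_concat (a b : G) (n : ℕ) :
    altProd a b (n + 1) = altProd a b n * (if Even n then a else b) := by
  rw [altProd, altList_concat, List.prod_append]; simp [altProd]

theorem altProd_two (a b : G) : altProd a b 2 = a * b := by
  simp [altProd, altList]

theorem altProd_zero (a b : G) : altProd a b 0 = 1 := rfl

theorem syll_zpow {x : G} (hx : x ∈ X) {α : ℤ} (h : x ^ α ≠ 1) : x ^ α ∈ Syll X :=
  ⟨x, hx, α, rfl, h⟩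

theorem syll_inv {s : G} (hs : s ∈ Syll X) : s⁻¹ ∈ Syll X := by
  obtain ⟨x, hx, α, rfl, h⟩ := hs
  exact ⟨x, hx, -α, by rw [zpow_neg], by simpa using h⟩

theorem pow_merge {x : G} (hx : x ∈ X) (α β : ℤ) :
    x ^ α * x ^ β ∈ Syll X ∨ x ^ α * x ^ β = 1 := by
  rw [← zpow_add]
  by_cases h : x ^ (α + β) = 1
  · exact Or.inr h
  · exact Or.inl (syll_zpow hx h)

theorem sylword_append {v w : List G} (hv : SylWord X v) (hw : SylWord X w) :
    SylWord X (v ++ w) := by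
  intro s hs
  rcases List.mem_append.mp hs with h | h
  · exact hv s h
  · exact hw s h

theorem sylword_altList {u v : G} (hu : u ∈ Syll X) (hv : v ∈ Syll X) (n : ℕ) :
    SylWord X (altList u v n) := by
  intro s hs
  rcases mem_altList hs with rfl | rfl
  · exact hu
  · exact hv

theorem sylLen_le {h : G} {v : List G} (hv : SylWord X v) (hp : v.prod = h) :
    sylLen X h ≤ v.length :=
  Nat.sInf_le ⟨v, hv, hp, rfl⟩

theorem exists_reduced {h : G} {v : List G} (hv : SylWord X v) (hp : v.prod = h) :
    ∃ r : List G, Reduced X r ∧ r.prod = h ∧ r.length = sylLen X h := by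
  have hne : {n | ∃ w : List G, SylWord X w ∧ w.prod = h ∧ w.length = n}.Nonempty :=
    ⟨v.length, v, hv, hp, rfl⟩
  obtain ⟨r, hr1, hr2, hr3⟩ := Nat.sInf_mem hne
  exact ⟨r, ⟨hr1, by rw [hr2]; exact hr3⟩, hr2, hr3⟩

theorem mk_reduced {h : G} {v : List G} (hv : SylWord X v) (hp : v.prod = h)
    (hl : v.length = sylLen X h) : Reduced X v :=
  ⟨hv, by rw [hp]; exact hl⟩

theorem no_adjacent (hPD : PropertyD X) {w₁ w₂ : List G} {u v : G}
    (hu : u ∈ Syll X) (hv : v ∈ Syll X) (huv : u * v ∈ Syll X ∨ u * v = 1)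
    (hred : Reduced X (w₁ ++ [u, v] ++ w₂)) : False := by
  have hM : MReduced X (w₁ ++ [u, v] ++ w₂) := (hPD.1 _ hred.1).mp hred
  rcases huv with h | h
  · refine hM (w₁ ++ [u * v] ++ w₂)
      (Relation.ReflTransGen.single (Or.inl ⟨w₁, w₂, u, v, hu, hv, rfl, Or.inl ⟨h, rfl⟩⟩)) ?_
    simp
  · refine hM (w₁ ++ w₂)
      (Relation.ReflTransGen.single (Or.inl ⟨w₁, w₂, u, v, hu, hv, rfl, Or.inr ⟨h, rfl⟩⟩)) ?_
    simp

theorem reduced_flip {z z₂ : List G} (hred : Reduced X z) (hop : MOpII X z z₂) :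
    Reduced X z₂ := by
  obtain ⟨w₁, w₂, s', t', k, hs', ht', hk2, hcomm, hklen, heq, heq'⟩ := hop
  have hsyl : SylWord X z₂ := by
    rw [heq']
    refine sylword_append (sylword_append ?_ (sylword_altList ht' hs' k)) ?_
    · intro e he; exact hred.1 e (by rw [heq]; simp [he])
    · intro e he; exact hred.1 e (by rw [heq]; simp [he])
  have hprod : z₂.prod = z.prod := by
    rw [heq, heq']
    simp only [List.prod_append]
    rw [show (altList t' s' k).prod = altProd t' s' k from rfl,
      show (altList s' t' k).prod = altProd s' t' k from rfl, ← hcomm]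
  have hlen : z₂.length = z.length := by
    rw [heq, heq']; simp [altList_length]
  exact ⟨hsyl, by rw [hprod, hlen]; exact hred.2⟩

theorem unique_of_noflip (hPD : PropertyD X) {r₀ : List G} (hr₀ : Reduced X r₀)
    (hno : ∀ z₂, MOpII X r₀ z₂ → False) {r : List G} (hr : Reduced X r)
    (hp : r.prod = r₀.prod) : r = r₀ := by
  have hchain := hPD.2 r₀ r hr₀ hr hp.symm
  rcases Relation.ReflTransGen.cases_head hchain with h | ⟨c, hc, _⟩
  · exact h.symm
  · exact absurd hc (hno c)

end AuxLemmas

section SegLoc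

variable {G : Type*} [Group G] {X : Set G}

theorem segloc_aux {u v s' t' : G} {N k : ℕ} {T w₁ w₂ : List G}
    (hk : 2 ≤ k)
    (hT : T = [] ∨ ∃ tl, T = [tl] ∧ tl ≠ u ∧ tl ≠ v)
    (heq : altList u v N ++ T = w₁ ++ (altList s' t' k ++ w₂)) :
    (w₁.length + k ≤ N ∧ w₁ = altList u v w₁.length ∧
      s' = (if Even w₁.length then u else v) ∧ t' = (if Even w₁.length then v else u) ∧
      w₂ = altList (if Even (w₁.length + k) then u else v)
            (if Even (w₁.length + k) then v else u) (N - (w₁.length + k)) ++ T) ∨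
    (∃ tl, T = [tl] ∧ k = 2 ∧ w₁.length = N - 1 ∧ 1 ≤ N ∧ w₁ = altList u v (N - 1) ∧
      w₂ = [] ∧ s' = (if Even (N - 1) then u else v) ∧ t' = tl) := by
  set p := w₁.length with hp
  have hTlen : T.length ≤ 1 := by
    rcases hT with rfl | ⟨tl, rfl, _, _⟩ <;> simp
  have hw₁ : (altList u v N ++ T).take p = w₁ := by rw [heq]; exact List.take_left' rfl
  have hseg : (altList u v N ++ T).drop p = altList s' t' k ++ w₂ := by
    rw [heq]; exact List.drop_left' rfl
  have hlentot : N + T.length = p + (k + w₂.length) := by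
    have := congrArg List.length heq
    simpa [altList_length] using this
  by_cases hle : p + k ≤ N
  · left
    have hpN : p ≤ N := by omega
    have hw₁' : w₁ = altList u v p := by
      rw [← hw₁, List.take_append, altList_take u v hpN, altList_length,
        show p - N = 0 by omega]
      simp
    have hdrop : altList s' t' k ++ w₂ =
        altList (if Even p then u else v) (if Even p then v else u) (N - p) ++ T := by
      rw [← hseg, List.drop_append, altList_drop, altList_length,
        show p - N = 0 by omega]
      simp
    have hsegval : altList s' t' k =
        altList (if Even p then u else v) (if Even p then v else u) k := by
      have := congrArg (List.take k) hdrop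
      rw [List.take_left' (altList_length _ _ _), List.take_append,
        altList_take _ _ (show k ≤ N - p by omega), altList_length,
        show k - (N - p) = 0 by omega] at this
      simpa using this
    obtain ⟨hs'v, ht'v⟩ := altList_inj hk hsegval
    have hw₂ : w₂ = altList (if Even (p + k) then u else v)
        (if Even (p + k) then v else u) (N - (p + k)) ++ T := by
      have := congrArg (List.drop k) hdrop
      rw [List.drop_left' (altList_length _ _ _), List.drop_append,
        altList_drop, altList_length, show k - (N - p) = 0 by omega] at this
      rw [this]
      congr 2 <;>
      · by_cases h1 : Even p <;> by_cases h2 : Even k <;>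
          simp [h1, h2, Nat.even_add, Nat.sub_sub]
    exact ⟨hle, hw₁', hs'v, ht'v, hw₂⟩
  · right
    obtain ⟨tl, rfl, htlu, htlv⟩ : ∃ tl, T = [tl] ∧ tl ≠ u ∧ tl ≠ v := by
      rcases hT with rfl | h
      · simp at hlentot; omega
      · exact h
    have hTl : p + k = N + 1 := by simp at hlentot; omega
    have hw₂ : w₂ = [] := by
      have : w₂.length = 0 := by simp at hlentot; omega
      exact List.length_eq_zero_iff.mp this
    have hpN : p ≤ N := by omega
    have hw₁' : w₁ = altList u v p := by
      rw [← hw₁, List.take_append, altList_take u v hpN, altList_length,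
        show p - N = 0 by omega]
      simp
    have hdrop : altList s' t' k =
        altList (if Even p then u else v) (if Even p then v else u) (N - p) ++ [tl] := by
      rw [hw₂, List.append_nil] at hseg
      rw [← hseg, List.drop_append, altList_drop, altList_length,
        show p - N = 0 by omega]
      simp
    have hconcat : altList s' t' k =
        altList s' t' (k - 1) ++ [if Even (k - 1) then s' else t'] := by
      conv_lhs => rw [show k = (k - 1) + 1 by omega]
      exact altList_concat _ _ _
    rw [hconcat] at hdrop
    have hinj := List.append_inj' hdrop (by simp)
    have hlast : (if Even (k - 1) then s' else t') = tl := by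
      have := hinj.2; simpa using this
    have hpre := hinj.1
    have hNp : N - p = k - 1 := by
      have := congrArg List.length hpre
      simp [altList_length] at this
      omega
    by_cases hk3 : 3 ≤ k
    · exfalso
      obtain ⟨hs'v, ht'v⟩ := altList_inj (by omega) (hpre.trans (by rw [hNp]))
      by_cases h : Even (k - 1)
      · rw [if_pos h, hs'v] at hlast
        by_cases hp2 : Even p
        · exact htlu (by rw [← hlast]; simp [hp2])
        · exact htlv (by rw [← hlast]; simp [hp2])
      · rw [if_neg h, ht'v] at hlast
        by_cases hp2 : Even p
        · exact htlv (by rw [← hlast]; simp [hp2])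
        · exact htlu (by rw [← hlast]; simp [hp2])
    · have hk2 : k = 2 := by omega
      subst hk2
      have hN1 : N - p = 1 := by omega
      have hpv : p = N - 1 := by omega
      have hs'v : s' = (if Even (N - 1) then u else v) := by
        rw [hN1] at hpre
        simp [altList] at hpre
        rw [← hpv]; exact hpre
      have ht'v : t' = tl := by simpa using hlast
      exact ⟨tl, rfl, rfl, hpv, by omega, by rw [hw₁', hpv], hw₂, hs'v, ht'v⟩

end SegLoc

section SegLoc2

variable {G : Type*} [Group G] {X : Set G}

set_option linter.unusedSectionVars false

theorem even_pred_iff {i : ℕ} (hi : 1 ≤ i) : Even (i - 1) ↔ ¬ Even i := by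
  obtain ⟨c, rfl⟩ : ∃ c, i = c + 1 := ⟨i - 1, by omega⟩
  simp [Nat.even_add_one]

theorem segloc {u v s' t' : G} {N k : ℕ} {H T w₁ w₂ : List G}
    (hN : 3 ≤ N) (hk : 2 ≤ k)
    (hH : H = [] ∨ ∃ h0, H = [h0] ∧ h0 ≠ u ∧ h0 ≠ v)
    (hT : T = [] ∨ ∃ tl, T = [tl] ∧ tl ≠ u ∧ tl ≠ v)
    (heq : H ++ altList u v N ++ T = w₁ ++ (altList s' t' k ++ w₂)) :
    (H = [] ∧ w₁ = [] ∧ w₂ = T ∧ k = N ∧ s' = u ∧ t' = v) ∨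
    ((((s' = u ∧ t' = v) ∨ (s' = v ∧ t' = u)) ∧ k ≤ N ∨
      (∃ h0, H = [h0] ∧ k = 2 ∧ s' = h0 ∧ t' = u) ∨
      (∃ tl, T = [tl] ∧ k = 2 ∧ s' = (if Even N then v else u) ∧ t' = tl)) ∧
     ∃ (w₁' w₂' : List G) (e₁ e₂ : G),
       w₁ ++ (altList t' s' k ++ w₂) = w₁' ++ ([e₁, e₂] ++ w₂') ∧
       ((e₁ = e₂ ∧ (e₁ = u ∨ e₁ = v)) ∨
        (∃ h0, H = [h0] ∧ e₁ = h0 ∧ e₂ = v) ∨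
        (∃ tl, T = [tl] ∧ e₁ = (if Even N then u else v) ∧ e₂ = tl))) := by
  rcases hH with rfl | ⟨h0, rfl, hh0u, hh0v⟩
  · -- H = []
    rw [List.nil_append] at heq
    rcases segloc_aux hk hT heq with
      ⟨hle, hw₁, hs', ht', hw₂⟩ | ⟨tl, hTtl, hk2, hpN, hN1, hw₁, hw₂, hs', ht'⟩
    · set p := w₁.length with hpdef
      by_cases hp0 : p = 0
      · by_cases hkN : k = N
        · -- full flip
          left
          refine ⟨rfl, by rw [hw₁, hp0]; rfl, ?_, hkN, by simp [hs', hp0], by simp [ht', hp0]⟩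
          rw [hw₂, hp0, hkN, show N - (0 + N) = 0 by omega]
          simp
        · -- right adjacency
          right
          constructor
          · exact Or.inl ⟨Or.inl ⟨by simp [hs', hp0], by simp [ht', hp0]⟩, by omega⟩
          · have hw₁nil : w₁ = [] := by rw [hw₁, hp0]; rfl
            have hw₂' : w₂ = (if Even k then u else v) ::
                (altList (if Even k then v else u) (if Even k then u else v) (N - k - 1) ++ T) := by
              rw [hw₂, hp0]
              rw [show N - (0 + k) = (N - k - 1) + 1 by omega, altList_cons]
              simp
            have hflip : altList t' s' k =
                altList t' s' (k - 1) ++ [if Even (k - 1) then t' else s'] := by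
              conv_lhs => rw [show k = (k - 1) + 1 by omega]
              exact altList_concat _ _ _
            have hfend : (if Even (k - 1) then t' else s') = (if Even k then u else v) := by
              rw [hs', ht', hp0]
              by_cases h2 : Even k <;> simp [even_pred_iff (show 1 ≤ k by omega), h2]
            refine ⟨altList t' s' (k - 1),
              altList (if Even k then v else u) (if Even k then u else v) (N - k - 1) ++ T,
              (if Even k then u else v), (if Even k then u else v), ?_, Or.inl ⟨rfl, ?_⟩⟩
            · rw [hw₁nil, hw₂', List.nil_append, hflip, hfend]
              simp
            · by_cases h2 : Even k <;> simp [h2]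
      · -- left adjacency, p ≥ 1
        right
        constructor
        · refine Or.inl ⟨?_, by omega⟩
          by_cases h1 : Even p
          · exact Or.inl ⟨by simp [hs', h1], by simp [ht', h1]⟩
          · exact Or.inr ⟨by simp [hs', h1], by simp [ht', h1]⟩
        · have hw₁' : w₁ = altList u v (p - 1) ++ [if Even (p - 1) then u else v] := by
            rw [hw₁]
            conv_lhs => rw [show p = (p - 1) + 1 by omega]
            exact altList_concat _ _ _
          have he : (if Even (p - 1) then u else v) = t' := by
            rw [ht']
            by_cases h1 : Even p <;> simp [even_pred_iff (show 1 ≤ p by omega), h1]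
          have hcons : altList t' s' k = t' :: altList s' t' (k - 1) := by
            conv_lhs => rw [show k = (k - 1) + 1 by omega]
            rfl
          refine ⟨altList u v (p - 1), altList s' t' (k - 1) ++ w₂, t', t', ?_,
            Or.inl ⟨rfl, by rw [ht']; by_cases h1 : Even p <;> simp [h1]⟩⟩
          rw [hw₁', hcons, he]
          simp
    · -- tail case (T = [tl], k = 2)
      subst hTtl
      right
      constructor
      · refine Or.inr (Or.inr ⟨tl, rfl, hk2, ?_, ht'⟩)
        rw [hs']
        by_cases h1 : Even N <;> simp [even_pred_iff (show 1 ≤ N by omega), h1]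
      · have hw₁' : w₁ = altList u v (N - 2) ++ [if Even (N - 2) then u else v] := by
          rw [hw₁]
          conv_lhs => rw [show N - 1 = (N - 2) + 1 by omega]
          exact altList_concat _ _ _
        have hflip : altList t' s' k = [t', s'] := by subst hk2; rfl
        refine ⟨altList u v (N - 2), [s'], (if Even (N - 2) then u else v), t', ?_,
          Or.inr (Or.inr ⟨tl, rfl, ?_, ht'⟩)⟩
        · rw [hw₁', hflip, hw₂]
          simp
        · by_cases h1 : Even N <;>
            simp [show Even (N - 2) ↔ Even N by
              obtain ⟨c, rfl⟩ : ∃ c, N = c + 2 := ⟨N - 2, by omega⟩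
              simp [Nat.even_add], h1]
  · -- H = [h0]
    cases w₁ with
    | nil =>
      obtain ⟨j, rfl⟩ : ∃ j, k = j + 2 := ⟨k - 2, by omega⟩
      have hcore : altList u v N = u :: v :: altList u v (N - 2) := by
        conv_lhs => rw [show N = (N - 2) + 2 by omega]
        rfl
      have heq2 : h0 :: (u :: (v :: (altList u v (N - 2) ++ T))) =
          s' :: (t' :: (altList s' t' j ++ w₂)) := by
        have h := heq
        rw [hcore] at h
        simpa [altList_two_add] using h
      injection heq2 with hs1 heq3
      injection heq3 with ht1 hrest
      by_cases hj0 : j = 0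
      · subst hj0
        right
        constructor
        · exact Or.inr (Or.inl ⟨h0, rfl, rfl, hs1.symm, ht1.symm⟩)
        · have hw₂' : w₂ = v :: (altList u v (N - 2) ++ T) := by
            simpa using hrest.symm
          refine ⟨[t'], altList u v (N - 2) ++ T, s', v, ?_,
            Or.inr (Or.inl ⟨h0, rfl, hs1.symm, rfl⟩)⟩
          rw [hw₂', show altList t' s' (0 + 2) = [t', s'] from rfl]
          simp
      · exfalso
        obtain ⟨j', rfl⟩ : ∃ j', j = j' + 1 := ⟨j - 1, by omega⟩
        have : altList s' t' (j' + 1) = s' :: altList t' s' j' := rfl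
        rw [this] at hrest
        injection hrest with hv _
        exact hh0v (by rw [hs1, ← hv])
    | cons h1 w₁' =>
      have heq2 : h0 :: (altList u v N ++ T) = h1 :: (w₁' ++ (altList s' t' k ++ w₂)) := by
        simpa using heq
      injection heq2 with hh1 heq'
      subst hh1
      rcases segloc_aux hk hT heq' with
        ⟨hle, hw₁, hs', ht', hw₂⟩ | ⟨tl, hTtl, hk2, hpN, hN1, hw₁, hw₂, hs', ht'⟩
      · set q := w₁'.length with hqdef
        right
        constructor
        · refine Or.inl ⟨?_, by omega⟩
          by_cases h1 : Even q
          · exact Or.inl ⟨by simp [hs', h1], by simp [ht', h1]⟩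
          · exact Or.inr ⟨by simp [hs', h1], by simp [ht', h1]⟩
        · by_cases hq0 : q = 0
          · have hw₁nil : w₁' = [] := by rw [hw₁, hq0]; rfl
            have hcons : altList t' s' k = t' :: altList s' t' (k - 1) := by
              conv_lhs => rw [show k = (k - 1) + 1 by omega]
              rfl
            refine ⟨[], altList s' t' (k - 1) ++ w₂, h0, t', ?_,
              Or.inr (Or.inl ⟨h0, rfl, rfl, by simp [ht', hq0]⟩)⟩
            rw [hw₁nil, hcons]
            simp
          · have hw₁'' : w₁' = altList u v (q - 1) ++ [if Even (q - 1) then u else v] := by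
              rw [hw₁]
              conv_lhs => rw [show q = (q - 1) + 1 by omega]
              exact altList_concat _ _ _
            have he2 : (if Even (q - 1) then u else v) = t' := by
              rw [ht']
              by_cases h1 : Even q <;> simp [even_pred_iff (show 1 ≤ q by omega), h1]
            have hcons : altList t' s' k = t' :: altList s' t' (k - 1) := by
              conv_lhs => rw [show k = (k - 1) + 1 by omega]
              rfl
            refine ⟨h0 :: altList u v (q - 1), altList s' t' (k - 1) ++ w₂, t', t', ?_,
              Or.inl ⟨rfl, by rw [ht']; by_cases h1 : Even q <;> simp [h1]⟩⟩
            rw [hw₁'', hcons, he2]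
            simp
      · subst hTtl
        right
        constructor
        · refine Or.inr (Or.inr ⟨tl, rfl, hk2, ?_, ht'⟩)
          rw [hs']
          by_cases h1 : Even N <;> simp [even_pred_iff (show 1 ≤ N by omega), h1]
        · have hw₁'' : w₁' = altList u v (N - 2) ++ [if Even (N - 2) then u else v] := by
            rw [hw₁]
            conv_lhs => rw [show N - 1 = (N - 2) + 1 by omega]
            exact altList_concat _ _ _
          have hflip : altList t' s' k = [t', s'] := by subst hk2; rfl
          refine ⟨h0 :: altList u v (N - 2), [s'], (if Even (N - 2) then u else v), t', ?_,
            Or.inr (Or.inr ⟨tl, rfl, ?_, ht'⟩)⟩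
          · rw [hw₁'', hflip, hw₂]
            simp
          · by_cases h1 : Even N <;>
              simp [show Even (N - 2) ↔ Even N by
                obtain ⟨c, rfl⟩ : ∃ c, N = c + 2 := ⟨N - 2, by omega⟩
                simp [Nat.even_add], h1]

end SegLoc2

section AdjLoc

variable {G : Type*} [Group G] {X : Set G}

set_option linter.unusedSectionVars false

theorem adjloc {u v h0 tl α β : G} {N : ℕ} {w₁ w₂ : List G}
    (hN : 2 ≤ N) (htlu : tl ≠ u) (htlv : tl ≠ v)
    (heq : [h0] ++ altList u v N ++ [tl] = w₁ ++ ([α, β] ++ w₂)) :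
    (α = h0 ∧ β = u) ∨ ((α = u ∧ β = v) ∨ (α = v ∧ β = u)) ∨
    (α = (if Even N then v else u) ∧ β = tl) := by
  cases w₁ with
  | nil =>
    have hcore : altList u v N = u :: altList v u (N - 1) := by
      conv_lhs => rw [show N = (N - 1) + 1 by omega]
      rfl
    have heq2 : h0 :: (u :: (altList v u (N - 1) ++ [tl])) = α :: (β :: w₂) := by
      have h := heq
      rw [hcore] at h
      simpa using h
    injection heq2 with h1 heq3
    injection heq3 with h2 _
    exact Or.inl ⟨h1.symm, h2.symm⟩
  | cons h1 w₁' =>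
    have heq2 : h0 :: (altList u v N ++ [tl]) = h1 :: (w₁' ++ ([α, β] ++ w₂)) := by
      simpa using heq
    injection heq2 with hh1 heq'
    have heq'' : altList u v N ++ [tl] = w₁' ++ (altList α β 2 ++ w₂) := heq'
    rcases segloc_aux (le_refl 2) (Or.inr ⟨tl, rfl, htlu, htlv⟩) heq'' with
      ⟨hle, hw₁, hs', ht', hw₂⟩ | ⟨tl', hTtl, hk2, hpN, hN1, hw₁, hw₂, hs', ht'⟩
    · right; left
      by_cases h1 : Even w₁'.length
      · exact Or.inl ⟨by simp [hs', h1], by simp [ht', h1]⟩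
      · exact Or.inr ⟨by simp [hs', h1], by simp [ht', h1]⟩
    · right; right
      have htl' : tl' = tl := by
        injection hTtl with h _
        exact h.symm
      constructor
      · rw [hs']
        by_cases h1 : Even N <;> simp [even_pred_iff (show 1 ≤ N by omega), h1]
      · rw [ht', htl']

end AdjLoc

section Main1

variable {G : Type*} [Group G] {X : Set G}

set_option linter.unusedSectionVars false

theorem sylword_single {q : G} (hq : q ∈ Syll X) : SylWord X [q] := by
  intro e he; simp at he; subst he; exact hq

theorem noadj_case (hPD : PropertyD X) {z₂ : List G} (hz₂ : Reduced X z₂)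
    {w₁' w₂' : List G} {e₁ e₂ : G} (hdec : z₂ = w₁' ++ ([e₁, e₂] ++ w₂'))
    (he₁ : e₁ ∈ Syll X) (he₂ : e₂ ∈ Syll X)
    (hme : e₁ * e₂ ∈ Syll X ∨ e₁ * e₂ = 1) : False := by
  refine no_adjacent hPD he₁ he₂ hme (w₁ := w₁') (w₂ := w₂') ?_
  rw [List.append_assoc, ← hdec]
  exact hz₂

theorem flip_step (hPD : PropertyD X) {u v : G} {M : ℕ} (hM : 3 ≤ M)
    (hu : u ∈ Syll X) (hv : v ∈ Syll X)
    (huu : u * u ∈ Syll X ∨ u * u = 1) (hvv : v * v ∈ Syll X ∨ v * v = 1)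
    (hred : Reduced X (altList u v M)) {z₂ : List G}
    (hop : MOpII X (altList u v M) z₂) : z₂ = altList v u M := by
  have hz₂red : Reduced X z₂ := reduced_flip hred hop
  obtain ⟨w₁, w₂, s', t', k, hs', ht', hk2, hcomm, hklen, heq, heq'⟩ := hop
  have heq2 : ([] : List G) ++ altList u v M ++ ([] : List G) = w₁ ++ (altList s' t' k ++ w₂) := by
    rw [List.nil_append, List.append_nil, heq, List.append_assoc]
  rcases segloc hM hk2 (Or.inl rfl) (Or.inl rfl) heq2 with
    ⟨_, hw₁, hw₂, hkM, hsu, htv⟩ | ⟨_, w₁', w₂', e₁, e₂, hdec, hpair⟩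
  · rw [heq', hw₁, hw₂, hkM, hsu, htv, List.append_nil, List.nil_append]
  · exfalso
    have hz₂dec : z₂ = w₁' ++ ([e₁, e₂] ++ w₂') := by
      rw [heq', List.append_assoc, hdec]
    rcases hpair with ⟨he, hev⟩ | ⟨h0, hH0, _⟩ | ⟨tl, hT0, _⟩
    · subst he
      rcases hev with rfl | rfl
      · exact noadj_case hPD hz₂red hz₂dec hu hu huu
      · exact noadj_case hPD hz₂red hz₂dec hv hv hvv
    · simp at hH0
    · simp at hT0

theorem redg (hPD : PropertyD X) {x y : G} (hx : x ∈ X) (hy : y ∈ X)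
    {a b : ℤ} (ha : x ^ a ≠ 1) (hb : y ^ b ≠ 1) {m : ℕ} (hm : 3 ≤ m)
    (halt : altProd (x ^ a) (y ^ b) m = altProd (y ^ b) (x ^ a) m)
    (hlen : sylLen X (altProd (x ^ a) (y ^ b) m) = m)
    {r : List G} (hr : Reduced X r) (hp : r.prod = altProd (x ^ a) (y ^ b) m) :
    r = altList (x ^ a) (y ^ b) m ∨ r = altList (y ^ b) (x ^ a) m := by
  have hs := syll_zpow hx ha
  have ht := syll_zpow hy hb
  have hredw : Reduced X (altList (x ^ a) (y ^ b) m) :=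
    mk_reduced (sylword_altList hs ht m) rfl (by rw [altList_length]; exact hlen.symm)
  have hredw' : Reduced X (altList (y ^ b) (x ^ a) m) :=
    mk_reduced (sylword_altList ht hs m) halt.symm (by rw [altList_length]; exact hlen.symm)
  have hchain := hPD.2 _ r hredw hr hp.symm
  clear hp hr
  induction hchain with
  | refl => exact Or.inl rfl
  | tail hc hstep ih =>
    rcases ih with rfl | rfl
    · exact Or.inr (flip_step hPD hm hs ht (pow_merge hx a a) (pow_merge hy b b) hredw hstep)
    · exact Or.inl (flip_step hPD hm ht hs (pow_merge hy b b) (pow_merge hx a a) hredw' hstep)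

theorem lemC (hPD : PropertyD X) {x y : G} (hx : x ∈ X) (hy : y ∈ X)
    {a b : ℤ} (ha : x ^ a ≠ 1) (hb : y ^ b ≠ 1) {m : ℕ} (hm : 3 ≤ m)
    (halt : altProd (x ^ a) (y ^ b) m = altProd (y ^ b) (x ^ a) m)
    (hlen : sylLen X (altProd (x ^ a) (y ^ b) m) = m)
    {k : ℕ} (hk2 : 2 ≤ k) (hkm : k < m)
    (hc : altProd (x ^ a) (y ^ b) k = altProd (y ^ b) (x ^ a) k)
    (hlc : sylLen X (altProd (x ^ a) (y ^ b) k) = k) : False := by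
  have hs := syll_zpow hx ha
  have ht := syll_zpow hy hb
  have hredw : Reduced X (altList (x ^ a) (y ^ b) m) :=
    mk_reduced (sylword_altList hs ht m) rfl (by rw [altList_length]; exact hlen.symm)
  have hsplit : altList (x ^ a) (y ^ b) m = altList (x ^ a) (y ^ b) k ++
      altList (if Even k then x ^ a else y ^ b) (if Even k then y ^ b else x ^ a) (m - k) := by
    conv_lhs => rw [← List.take_append_drop k (altList (x ^ a) (y ^ b) m)]
    rw [altList_take _ _ (by omega : k ≤ m), altList_drop]
  have hop : MOpII X (altList (x ^ a) (y ^ b) m)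
      (([] : List G) ++ altList (y ^ b) (x ^ a) k ++
        altList (if Even k then x ^ a else y ^ b) (if Even k then y ^ b else x ^ a) (m - k)) :=
    ⟨[], _, x ^ a, y ^ b, k, hs, ht, hk2, hc, hlc, by rw [List.nil_append, hsplit], rfl⟩
  have hz₂red := reduced_flip hredw hop
  have heq2 : ([] : List G) ++ altList (x ^ a) (y ^ b) m ++ ([] : List G) =
      ([] : List G) ++ (altList (x ^ a) (y ^ b) k ++
        altList (if Even k then x ^ a else y ^ b) (if Even k then y ^ b else x ^ a) (m - k)) := by
    rw [List.nil_append, List.nil_append, List.append_nil, hsplit]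
  rcases segloc hm hk2 (Or.inl rfl) (Or.inl rfl) heq2 with
    ⟨_, _, _, hkm', _, _⟩ | ⟨_, w₁', w₂', e₁, e₂, hdec, hpair⟩
  · omega
  · have hz₂dec : ([] : List G) ++ altList (y ^ b) (x ^ a) k ++
        altList (if Even k then x ^ a else y ^ b) (if Even k then y ^ b else x ^ a) (m - k) =
        w₁' ++ ([e₁, e₂] ++ w₂') := by
      rw [List.nil_append]
      exact hdec
    rcases hpair with ⟨he, hev⟩ | ⟨h0, hH0, _⟩ | ⟨tl, hT0, _⟩
    · subst he
      rcases hev with rfl | rfl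
      · exact noadj_case hPD hz₂red hz₂dec hs hs (pow_merge hx a a)
      · exact noadj_case hPD hz₂red hz₂dec ht ht (pow_merge hy b b)
    · simp at hH0
    · simp at hT0

end Main1

section Step1

variable {G : Type*} [Group G] {X : Set G}

set_option linter.unusedSectionVars false

theorem F1c (hSM : StronglyMarked X) {x y : G} (hx : x ∈ X) (hy : y ∈ X) (hxy : x ≠ y)
    {α β : ℤ} (hα : x ^ α ≠ 1) (hβ : y ^ β ≠ 1) : x ^ α ≠ y ^ β := by
  intro h
  have h1 : x ^ α * y ^ (-β) = 1 := by rw [h, zpow_neg, mul_inv_cancel]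
  exact hxy (hSM.2.2 x hx y hy α (-β) hα (by rw [zpow_neg]; simpa using hβ) (Or.inr h1))

theorem F1a (hSM : StronglyMarked X) {x y : G} (hx : x ∈ X) (hy : y ∈ X) (hxy : x ≠ y)
    {α β : ℤ} (hα : x ^ α ≠ 1) (hβ : y ^ β ≠ 1) :
    ¬(x ^ α * y ^ β ∈ Syll X ∨ x ^ α * y ^ β = 1) := fun h =>
  hxy (hSM.2.2 x hx y hy α β hα hβ h)

theorem step1 (hSM : StronglyMarked X) (hPD : PropertyD X) {x y : G}
    (hx : x ∈ X) (hy : y ∈ X) (hxy : x ≠ y)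
    {a b : ℤ} (ha : x ^ a ≠ 1) (hb : y ^ b ≠ 1)
    {m : ℕ} (hm : 3 ≤ m) (hme : Even m)
    (halt : altProd (x ^ a) (y ^ b) m = altProd (y ^ b) (x ^ a) m)
    (hlen : sylLen X (altProd (x ^ a) (y ^ b) m) = m) :
    x ^ a * x ^ a = 1 := by
  by_contra hs2
  have hs := syll_zpow hx ha
  have ht := syll_zpow hy hb
  have hm4 : 4 ≤ m := by
    obtain ⟨c, hc⟩ := hme; omega
  have hm1e : ¬ Even (m - 1) := by
    rw [even_pred_iff (by omega : 1 ≤ m)]; simpa using hme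
  have hss : x ^ a * x ^ a = x ^ (a + a) := (zpow_add x a a).symm
  have hssne : x ^ (a + a) ≠ 1 := by rw [← hss]; exact hs2
  have hssS : x ^ a * x ^ a ∈ Syll X := by rw [hss]; exact syll_zpow hx hssne
  -- identities
  have hg_cons : altProd (x ^ a) (y ^ b) m = x ^ a * altProd (y ^ b) (x ^ a) (m - 1) := by
    conv_lhs => rw [show m = (m - 1) + 1 by omega]
    exact altProd_cons _ _ _
  have hg_concat : altProd (y ^ b) (x ^ a) (m - 1) * x ^ a = altProd (y ^ b) (x ^ a) m := by
    have h1 := altProd_concat (y ^ b) (x ^ a) (m - 1)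
    rw [show (m - 1) + 1 = m by omega, if_neg hm1e] at h1
    exact h1.symm
  have hgs_comm : altProd (x ^ a) (y ^ b) m * x ^ a = x ^ a * altProd (x ^ a) (y ^ b) m := by
    have h1 : altProd (x ^ a) (y ^ b) (m + 1) = altProd (x ^ a) (y ^ b) m * x ^ a := by
      rw [altProd_concat, if_pos hme]
    have h2 : altProd (x ^ a) (y ^ b) (m + 1) = x ^ a * altProd (y ^ b) (x ^ a) m :=
      altProd_cons _ _ _
    rw [← h1, h2, ← halt]
  -- the two words
  have hu₁syl : SylWord X ((x ^ a * x ^ a) :: altList (y ^ b) (x ^ a) (m - 1)) := by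
    intro e he
    rcases List.mem_cons.mp he with rfl | he
    · exact hssS
    · exact sylword_altList ht hs _ e he
  have hu₂syl : SylWord X (altList (y ^ b) (x ^ a) (m - 1) ++ [x ^ a * x ^ a]) :=
    sylword_append (sylword_altList ht hs _) (sylword_single hssS)
  have hu₁prod : ((x ^ a * x ^ a) :: altList (y ^ b) (x ^ a) (m - 1)).prod =
      altProd (x ^ a) (y ^ b) m * x ^ a := by
    rw [List.prod_cons]
    show x ^ a * x ^ a * altProd (y ^ b) (x ^ a) (m - 1) = _
    rw [mul_assoc, ← hg_cons, hgs_comm]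
  have hu₂prod : (altList (y ^ b) (x ^ a) (m - 1) ++ [x ^ a * x ^ a]).prod =
      altProd (x ^ a) (y ^ b) m * x ^ a := by
    rw [List.prod_append, List.prod_singleton]
    show altProd (y ^ b) (x ^ a) (m - 1) * (x ^ a * x ^ a) = _
    rw [← mul_assoc, hg_concat, ← halt]
  -- dichotomy for sylLen (g * s)
  have hub : sylLen X (altProd (x ^ a) (y ^ b) m * x ^ a) ≤ m := by
    have := sylLen_le hu₂syl hu₂prod
    simpa [altList_length] using (le_trans this (by simp [altList_length]; omega))
  have hlb : m ≤ sylLen X (altProd (x ^ a) (y ^ b) m * x ^ a) + 1 := by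
    obtain ⟨r, hrred, hrprod, hrlen⟩ := exists_reduced hu₂syl hu₂prod
    have hsyl2 : SylWord X (r ++ [(x ^ a)⁻¹]) :=
      sylword_append hrred.1 (sylword_single (syll_inv hs))
    have hprod2 : (r ++ [(x ^ a)⁻¹]).prod = altProd (x ^ a) (y ^ b) m := by
      rw [List.prod_append, List.prod_singleton, hrprod, mul_assoc, mul_inv_cancel, mul_one]
    have := sylLen_le hsyl2 hprod2
    rw [hlen] at this
    simp at this
    omega
  rcases (show sylLen X (altProd (x ^ a) (y ^ b) m * x ^ a) = m - 1 ∨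
      sylLen X (altProd (x ^ a) (y ^ b) m * x ^ a) = m by omega) with hcase | hcase
  · -- sylLen (g s) = m - 1
    obtain ⟨r, hrred, hrprod, hrlen⟩ := exists_reduced hu₂syl hu₂prod
    have hWsyl : SylWord X (r ++ [(x ^ a)⁻¹]) :=
      sylword_append hrred.1 (sylword_single (syll_inv hs))
    have hWprod : (r ++ [(x ^ a)⁻¹]).prod = altProd (x ^ a) (y ^ b) m := by
      rw [List.prod_append, List.prod_singleton, hrprod, mul_assoc, mul_inv_cancel, mul_one]
    have hWred : Reduced X (r ++ [(x ^ a)⁻¹]) := by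
      refine mk_reduced hWsyl hWprod ?_
      rw [hlen]
      simp [hrlen, hcase]
      omega
    rcases redg hPD hx hy ha hb hm halt hlen hWred hWprod with hW | hW
    · have hw_concat : altList (x ^ a) (y ^ b) m = altList (x ^ a) (y ^ b) (m - 1) ++ [y ^ b] := by
        conv_lhs => rw [show m = (m - 1) + 1 by omega]
        rw [altList_concat, if_neg hm1e]
      rw [hw_concat] at hW
      have hinj := (List.append_inj' hW (by simp)).2
      have hinv : (x ^ a)⁻¹ = y ^ b := by injection hinj
      refine F1c hSM hx hy hxy (α := -a) (β := b) ?_ hb ?_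
      · rw [zpow_neg]; simpa using ha
      · rw [zpow_neg]; exact hinv
    · have hw_concat : altList (y ^ b) (x ^ a) m = altList (y ^ b) (x ^ a) (m - 1) ++ [x ^ a] := by
        conv_lhs => rw [show m = (m - 1) + 1 by omega]
        rw [altList_concat, if_neg hm1e]
      rw [hw_concat] at hW
      have hinj := (List.append_inj' hW (by simp)).2
      have hinv : (x ^ a)⁻¹ = x ^ a := by injection hinj
      refine hs2 ?_
      have h2 : x ^ a * x ^ a = x ^ a * (x ^ a)⁻¹ := by rw [hinv]
      rw [h2, mul_inv_cancel]
  · -- sylLen (g s) = m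
    have hu₁red : Reduced X ((x ^ a * x ^ a) :: altList (y ^ b) (x ^ a) (m - 1)) := by
      refine mk_reduced hu₁syl hu₁prod ?_
      rw [hcase]
      simp [altList_length]
      omega
    have hu₂red : Reduced X (altList (y ^ b) (x ^ a) (m - 1) ++ [x ^ a * x ^ a]) := by
      refine mk_reduced hu₂syl hu₂prod ?_
      rw [hcase]
      simp [altList_length]
      omega
    have hne : ((x ^ a * x ^ a) :: altList (y ^ b) (x ^ a) (m - 1)) ≠
        (altList (y ^ b) (x ^ a) (m - 1) ++ [x ^ a * x ^ a]) := by
      intro h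
      have hu₂cons : altList (y ^ b) (x ^ a) (m - 1) ++ [x ^ a * x ^ a] =
          (y ^ b) :: (altList (x ^ a) (y ^ b) (m - 2) ++ [x ^ a * x ^ a]) := by
        conv_lhs => rw [show m - 1 = (m - 2) + 1 by omega, altList_cons]
        simp
      rw [hu₂cons] at h
      have : x ^ a * x ^ a = y ^ b := by injection h
      exact F1c hSM hx hy hxy hssne hb (by rw [← hss]; exact this)
    have hchain := hPD.2 _ _ hu₁red hu₂red (hu₁prod.trans hu₂prod.symm)
    rcases Relation.ReflTransGen.cases_head hchain with h | ⟨z₂, hop, _⟩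
    · exact hne h
    · have hz₂red : Reduced X z₂ := reduced_flip hu₁red hop
      obtain ⟨w₁, w₂, s', t', k, hs', ht', hk2, hcomm, hklen, heqq, heq'⟩ := hop
      have heq2 : [x ^ a * x ^ a] ++ altList (y ^ b) (x ^ a) (m - 1) ++ ([] : List G) =
          w₁ ++ (altList s' t' k ++ w₂) := by
        rw [List.append_nil, List.singleton_append, heqq, List.append_assoc]
      have hssnt : x ^ a * x ^ a ≠ y ^ b := by
        rw [hss]; exact F1c hSM hx hy hxy hssne hb
      have hssns : x ^ a * x ^ a ≠ x ^ a := by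
        intro h
        have h2 : x ^ a * x ^ a = 1 * x ^ a := by rw [h, one_mul]
        exact ha (mul_right_cancel h2)
      rcases segloc (show 3 ≤ m - 1 by omega) hk2
          (Or.inr ⟨x ^ a * x ^ a, rfl, hssnt, hssns⟩) (Or.inl rfl) heq2 with
        ⟨hHnil, _⟩ | ⟨_, w₁', w₂', e₁, e₂, hdec, hpair⟩
      · simp at hHnil
      · have hz₂dec : z₂ = w₁' ++ ([e₁, e₂] ++ w₂') := by
          rw [heq', List.append_assoc, hdec]
        rcases hpair with ⟨he, hev⟩ | ⟨h0, hH0, he₁, he₂⟩ | ⟨tl, hT0, _⟩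
        · subst he
          rcases hev with rfl | rfl
          · exact noadj_case hPD hz₂red hz₂dec ht ht (pow_merge hy b b)
          · exact noadj_case hPD hz₂red hz₂dec hs hs (pow_merge hx a a)
        · have hh0 : x ^ a * x ^ a = h0 := by injection hH0
          subst he₁; subst he₂
          rw [← hh0] at hz₂dec
          refine noadj_case hPD hz₂red hz₂dec hssS hs ?_
          rw [hss]
          exact pow_merge hx (a + a) a
        · simp at hT0
  done

end Step1

section Step2

variable {G : Type*} [Group G] {X : Set G}

set_option linter.unusedSectionVars false
set_option maxHeartbeats 1000000

theorem step2 (hSM : StronglyMarked X) (hPD : PropertyD X) {x y : G}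
    (hx : x ∈ X) (hy : y ∈ X) (hxy : x ≠ y)
    {a b : ℤ} (ha : x ^ a ≠ 1) (hb : y ^ b ≠ 1)
    {m : ℕ} (hm : 3 ≤ m) (hme : Even m)
    (halt : altProd (x ^ a) (y ^ b) m = altProd (y ^ b) (x ^ a) m)
    (hlen : sylLen X (altProd (x ^ a) (y ^ b) m) = m)
    (hs2 : x ^ a * x ^ a = 1) (ht2 : y ^ b * y ^ b = 1) :
    x ^ (a + 1) = 1 := by
  by_contra hc
  have hs := syll_zpow hx ha
  have ht := syll_zpow hy hb
  have hm4 : 4 ≤ m := by obtain ⟨c, hc'⟩ := hme; omega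
  have hm1e : ¬ Even (m - 1) := by
    rw [even_pred_iff (by omega : 1 ≤ m)]; simpa using hme
  have hx1 : x ≠ 1 := fun h => hSM.2.1 (h ▸ hx)
  have hsx : x ∈ Syll X := ⟨x, hx, 1, (zpow_one x).symm, hx1⟩
  have hsxinv : x⁻¹ ∈ Syll X := syll_inv hsx
  have hx2a : x ^ (a + a) = 1 := by rw [zpow_add]; exact hs2
  have hxexp : ∀ e : ℤ, x ^ (a + a + e) = x ^ e := fun e => by
    rw [zpow_add, hx2a, one_mul]
  have hpowinj : ∀ {e f : ℤ}, x ^ e = x ^ f → x ^ (e - f) = 1 := fun h => by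
    rw [zpow_sub, h, mul_inv_cancel]
  have hsinv : (x ^ a)⁻¹ = x ^ a := inv_eq_of_mul_eq_one_right hs2
  have hc2 : x ^ (a - 1) ≠ 1 := by
    intro h
    have hxa : x ^ a = x := by
      have h1 : x ^ a = x ^ (a - 1) * x := by
        rw [← zpow_add_one, sub_add_cancel]
      rw [h1, h, one_mul]
    apply hc
    have h3 : x ^ (a + 1) = x ^ a * x ^ a := by
      rw [zpow_add, zpow_one, hxa]
    exact h3.trans hs2
  have hxs : x ≠ x ^ a := by
    intro h
    apply hc2
    have h1 : x ^ a = x ^ (1 : ℤ) := by rw [zpow_one, ← h]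
    exact hpowinj h1
  have hcX : x ^ (a + 1) ∈ Syll X := syll_zpow hx hc
  have hc2X : x ^ (a - 1) ∈ Syll X := syll_zpow hx hc2
  -- mixed-letter inequalities
  have hxt : x ≠ y ^ b := by
    have := F1c hSM hx hy hxy (α := 1) (β := b) (by rw [zpow_one]; exact hx1) hb
    rwa [zpow_one] at this
  have hxinv1 : x⁻¹ = x ^ (-1 : ℤ) := by rw [zpow_neg, zpow_one]
  have hxinvne : x⁻¹ ≠ 1 := by simpa using hx1
  have hxit : x⁻¹ ≠ y ^ b := by
    have := F1c hSM hx hy hxy (α := -1) (β := b)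
      (by rw [← hxinv1]; exact hxinvne) hb
    rwa [← hxinv1] at this
  have hct : x ^ (a + 1) ≠ y ^ b := F1c hSM hx hy hxy hc hb
  have hc2t : x ^ (a - 1) ≠ y ^ b := F1c hSM hx hy hxy hc2 hb
  have hcs : x ^ (a + 1) ≠ x ^ a := by
    intro h
    have h2 := hpowinj h
    rw [show a + 1 - a = 1 by ring, zpow_one] at h2
    exact hx1 h2
  have hc2s : x ^ (a - 1) ≠ x ^ a := by
    intro h
    have h2 := hpowinj h
    rw [show a - 1 - a = -1 by ring, ← hxinv1] at h2
    exact hxinvne h2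
  have hxis : x⁻¹ ≠ x ^ a := by
    intro h
    apply hc
    rw [zpow_add, zpow_one, ← h, inv_mul_cancel]
  -- identities
  have hg_concat : altProd (y ^ b) (x ^ a) (m - 1) * x ^ a = altProd (y ^ b) (x ^ a) m := by
    have h1 := altProd_concat (y ^ b) (x ^ a) (m - 1)
    rw [show (m - 1) + 1 = m by omega, if_neg hm1e] at h1
    exact h1.symm
  have hgs_comm : altProd (x ^ a) (y ^ b) m * x ^ a = x ^ a * altProd (x ^ a) (y ^ b) m := by
    have h1 : altProd (x ^ a) (y ^ b) (m + 1) = altProd (x ^ a) (y ^ b) m * x ^ a := by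
      rw [altProd_concat, if_pos hme]
    have h2 : altProd (x ^ a) (y ^ b) (m + 1) = x ^ a * altProd (y ^ b) (x ^ a) m :=
      altProd_cons _ _ _
    rw [← h1, h2, ← halt]
  have hA3 : altProd (y ^ b) (x ^ a) (m - 1) = altProd (x ^ a) (y ^ b) m * x ^ a := by
    have e1 : altProd (y ^ b) (x ^ a) (m - 1) = altProd (y ^ b) (x ^ a) m * (x ^ a)⁻¹ :=
      eq_mul_inv_of_mul_eq hg_concat
    rw [hsinv, ← halt] at e1
    exact e1
  have hss1 : x ^ a * x ^ (a - 1) = x⁻¹ := by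
    rw [← zpow_add, show a + (a - 1) = a + a + -1 by ring, hxexp, ← hxinv1]
  have hss2 : x ^ (a + 1) * x ^ a = x := by
    rw [← zpow_add, show a + 1 + a = a + a + 1 by ring, hxexp, zpow_one]
  have hss3 : x * x ^ a = x ^ (a + 1) := by
    rw [show a + 1 = 1 + a by ring, zpow_add, zpow_one]
  have hss4 : x ^ a * x = x ^ (a + 1) := by
    rw [zpow_add_one]
  -- key word products
  have hcLP : x ^ (a + 1) * altProd (y ^ b) (x ^ a) (m - 1) =
      x * altProd (x ^ a) (y ^ b) m := by
    rw [hA3, hgs_comm, ← mul_assoc, hss2]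
  have hxLP : x * altProd (y ^ b) (x ^ a) (m - 1) =
      x ^ (a + 1) * altProd (x ^ a) (y ^ b) m := by
    rw [hA3, hgs_comm, ← mul_assoc, hss3]
  have hLPc2 : altProd (y ^ b) (x ^ a) (m - 1) * x ^ (a - 1) =
      altProd (x ^ a) (y ^ b) m * x⁻¹ := by
    rw [hA3, mul_assoc, hss1]
  have hLPx : altProd (y ^ b) (x ^ a) (m - 1) * x =
      altProd (x ^ a) (y ^ b) m * x ^ (a + 1) := by
    rw [hA3, mul_assoc, hss4]
  -- the word v₂'' for g * x⁻¹
  have hv₂syl : SylWord X (altList (y ^ b) (x ^ a) (m - 1) ++ [x ^ (a - 1)]) :=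
    sylword_append (sylword_altList ht hs _) (sylword_single hc2X)
  have hv₂prod : (altList (y ^ b) (x ^ a) (m - 1) ++ [x ^ (a - 1)]).prod =
      altProd (x ^ a) (y ^ b) m * x⁻¹ := by
    rw [List.prod_append, List.prod_singleton]
    exact hLPc2
  -- w and w' concat/cons decompositions for redg extraction
  have hw_concat : altList (x ^ a) (y ^ b) m = altList (x ^ a) (y ^ b) (m - 1) ++ [y ^ b] := by
    conv_lhs => rw [show m = (m - 1) + 1 by omega]
    rw [altList_concat, if_neg hm1e]
  have hw'_concat : altList (y ^ b) (x ^ a) m = altList (y ^ b) (x ^ a) (m - 1) ++ [x ^ a] := by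
    conv_lhs => rw [show m = (m - 1) + 1 by omega]
    rw [altList_concat, if_neg hm1e]
  have hw_cons : altList (x ^ a) (y ^ b) m = x ^ a :: altList (y ^ b) (x ^ a) (m - 1) := by
    conv_lhs => rw [show m = (m - 1) + 1 by omega]
    rfl
  have hw'_cons : altList (y ^ b) (x ^ a) m = y ^ b :: altList (x ^ a) (y ^ b) (m - 1) := by
    conv_lhs => rw [show m = (m - 1) + 1 by omega]
    rfl
  -- sylLen (g * x⁻¹) = m
  have hGX : sylLen X (altProd (x ^ a) (y ^ b) m * x⁻¹) = m := by
    have hub : sylLen X (altProd (x ^ a) (y ^ b) m * x⁻¹) ≤ m := by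
      have h1 := sylLen_le hv₂syl hv₂prod
      simp [altList_length] at h1
      omega
    obtain ⟨r, hrred, hrprod, hrlen⟩ := exists_reduced hv₂syl hv₂prod
    have hWsyl : SylWord X (r ++ [x]) := sylword_append hrred.1 (sylword_single hsx)
    have hWprod : (r ++ [x]).prod = altProd (x ^ a) (y ^ b) m := by
      rw [List.prod_append, List.prod_singleton, hrprod]
      group
    have hlb : m ≤ sylLen X (altProd (x ^ a) (y ^ b) m * x⁻¹) + 1 := by
      have h1 := sylLen_le hWsyl hWprod
      rw [hlen] at h1
      simp [hrlen] at h1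
      omega
    rcases (show sylLen X (altProd (x ^ a) (y ^ b) m * x⁻¹) = m - 1 ∨
        sylLen X (altProd (x ^ a) (y ^ b) m * x⁻¹) = m by omega) with hcase | hcase
    · exfalso
      have hWred : Reduced X (r ++ [x]) := by
        refine mk_reduced hWsyl hWprod ?_
        rw [hlen]
        simp [hrlen, hcase]
        omega
      rcases redg hPD hx hy ha hb hm halt hlen hWred hWprod with hW | hW
      · rw [hw_concat] at hW
        have hinj := (List.append_inj' hW (by simp)).2
        have : x = y ^ b := by injection hinj
        exact hxt this
      · rw [hw'_concat] at hW
        have hinj := (List.append_inj' hW (by simp)).2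
        have : x = x ^ a := by injection hinj
        exact hxs this
    · exact hcase
  have hv₂red : Reduced X (altList (y ^ b) (x ^ a) (m - 1) ++ [x ^ (a - 1)]) := by
    refine mk_reduced hv₂syl hv₂prod ?_
    rw [hGX]
    simp [altList_length]
    omega
  have hnoflip_v₂ : ∀ z₂, MOpII X (altList (y ^ b) (x ^ a) (m - 1) ++ [x ^ (a - 1)]) z₂ →
      False := by
    intro z₂ hop
    have hz₂red := reduced_flip hv₂red hop
    obtain ⟨w₁, w₂, s', t', k, hs', ht', hk2, hcomm, hklen, heqq, heq'⟩ := hop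
    have heq2 : ([] : List G) ++ altList (y ^ b) (x ^ a) (m - 1) ++ [x ^ (a - 1)] =
        w₁ ++ (altList s' t' k ++ w₂) := by
      rw [List.nil_append, heqq, List.append_assoc]
    rcases segloc (show 3 ≤ m - 1 by omega) hk2 (Or.inl rfl)
        (Or.inr ⟨x ^ (a - 1), rfl, hc2t, hc2s⟩) heq2 with
      ⟨_, hw₁, hw₂, hkN, hsu, htv⟩ | ⟨_, w₁', w₂', e₁, e₂, hdec, hpair⟩
    · rw [hsu, htv] at hcomm hklen
      refine lemC hPD hx hy ha hb hm halt hlen (k := k) hk2 (by omega) hcomm.symm ?_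
      rw [← hcomm]
      exact hklen
    · have hz₂dec : z₂ = w₁' ++ ([e₁, e₂] ++ w₂') := by
        rw [heq', List.append_assoc, hdec]
      rcases hpair with ⟨he, hev⟩ | ⟨h0, hH0, _⟩ | ⟨tl, hT0, he₁, he₂⟩
      · subst he
        rcases hev with rfl | rfl
        · exact noadj_case hPD hz₂red hz₂dec ht ht (pow_merge hy b b)
        · exact noadj_case hPD hz₂red hz₂dec hs hs (pow_merge hx a a)
      · simp at hH0
      · have htl : x ^ (a - 1) = tl := by injection hT0
        subst he₁; subst he₂
        rw [← htl, if_neg hm1e] at hz₂dec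
        exact noadj_case hPD hz₂red hz₂dec hs hc2X (pow_merge hx a (a - 1))
  -- sylLen (x * g) = m, word v₁
  have hv₁syl : SylWord X (x ^ (a + 1) :: altList (y ^ b) (x ^ a) (m - 1)) := by
    intro e he
    rcases List.mem_cons.mp he with rfl | he
    · exact hcX
    · exact sylword_altList ht hs _ e he
  have hv₁prod : (x ^ (a + 1) :: altList (y ^ b) (x ^ a) (m - 1)).prod =
      x * altProd (x ^ a) (y ^ b) m := by
    rw [List.prod_cons]
    exact hcLP
  have hXG : sylLen X (x * altProd (x ^ a) (y ^ b) m) = m := by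
    have hub : sylLen X (x * altProd (x ^ a) (y ^ b) m) ≤ m := by
      have h1 := sylLen_le hv₁syl hv₁prod
      simp [altList_length] at h1
      omega
    obtain ⟨r, hrred, hrprod, hrlen⟩ := exists_reduced hv₁syl hv₁prod
    have hWsyl : SylWord X (x⁻¹ :: r) := by
      intro e he
      rcases List.mem_cons.mp he with rfl | he
      · exact hsxinv
      · exact hrred.1 e he
    have hWprod : (x⁻¹ :: r).prod = altProd (x ^ a) (y ^ b) m := by
      rw [List.prod_cons, hrprod]
      group
    have hlb : m ≤ sylLen X (x * altProd (x ^ a) (y ^ b) m) + 1 := by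
      have h1 := sylLen_le hWsyl hWprod
      rw [hlen] at h1
      simp [hrlen] at h1
      omega
    rcases (show sylLen X (x * altProd (x ^ a) (y ^ b) m) = m - 1 ∨
        sylLen X (x * altProd (x ^ a) (y ^ b) m) = m by omega) with hcase | hcase
    · exfalso
      have hWred : Reduced X (x⁻¹ :: r) := by
        refine mk_reduced hWsyl hWprod ?_
        rw [hlen]
        simp [hrlen, hcase]
        omega
      rcases redg hPD hx hy ha hb hm halt hlen hWred hWprod with hW | hW
      · rw [hw_cons] at hW
        have : x⁻¹ = x ^ a := by injection hW
        exact hxis this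
      · rw [hw'_cons] at hW
        have : x⁻¹ = y ^ b := by injection hW
        exact hxit this
    · exact hcase
  have hv₁red : Reduced X (x ^ (a + 1) :: altList (y ^ b) (x ^ a) (m - 1)) := by
    refine mk_reduced hv₁syl hv₁prod ?_
    rw [hXG]
    simp [altList_length]
    omega
  have hnoflip_v₁ : ∀ z₂, MOpII X (x ^ (a + 1) :: altList (y ^ b) (x ^ a) (m - 1)) z₂ →
      False := by
    intro z₂ hop
    have hz₂red := reduced_flip hv₁red hop
    obtain ⟨w₁, w₂, s', t', k, hs', ht', hk2, hcomm, hklen, heqq, heq'⟩ := hop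
    have heq2 : [x ^ (a + 1)] ++ altList (y ^ b) (x ^ a) (m - 1) ++ ([] : List G) =
        w₁ ++ (altList s' t' k ++ w₂) := by
      rw [List.append_nil, List.singleton_append, heqq, List.append_assoc]
    rcases segloc (show 3 ≤ m - 1 by omega) hk2
        (Or.inr ⟨x ^ (a + 1), rfl, hct, hcs⟩) (Or.inl rfl) heq2 with
      ⟨hHnil, _⟩ | ⟨_, w₁', w₂', e₁, e₂, hdec, hpair⟩
    · simp at hHnil
    · have hz₂dec : z₂ = w₁' ++ ([e₁, e₂] ++ w₂') := by
        rw [heq', List.append_assoc, hdec]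
      rcases hpair with ⟨he, hev⟩ | ⟨h0, hH0, he₁, he₂⟩ | ⟨tl, hT0, _⟩
      · subst he
        rcases hev with rfl | rfl
        · exact noadj_case hPD hz₂red hz₂dec ht ht (pow_merge hy b b)
        · exact noadj_case hPD hz₂red hz₂dec hs hs (pow_merge hx a a)
      · have hh0 : x ^ (a + 1) = h0 := by injection hH0
        subst he₁; subst he₂
        rw [← hh0] at hz₂dec
        exact noadj_case hPD hz₂red hz₂dec hcX hs (pow_merge hx (a + 1) a)
      · simp at hT0
  -- sylLen (x^(a+1) * g) = m, word w₄ = x :: L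
  have hw₄syl : SylWord X (x :: altList (y ^ b) (x ^ a) (m - 1)) := by
    intro e he
    rcases List.mem_cons.mp he with rfl | he
    · exact hsx
    · exact sylword_altList ht hs _ e he
  have hw₄prod : (x :: altList (y ^ b) (x ^ a) (m - 1)).prod =
      x ^ (a + 1) * altProd (x ^ a) (y ^ b) m := by
    rw [List.prod_cons]
    exact hxLP
  have hCG : sylLen X (x ^ (a + 1) * altProd (x ^ a) (y ^ b) m) = m := by
    have hub : sylLen X (x ^ (a + 1) * altProd (x ^ a) (y ^ b) m) ≤ m := by
      have h1 := sylLen_le hw₄syl hw₄prod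
      simp [altList_length] at h1
      omega
    obtain ⟨r, hrred, hrprod, hrlen⟩ := exists_reduced hw₄syl hw₄prod
    have hWsyl : SylWord X (x ^ (-(a + 1)) :: r) := by
      intro e he
      rcases List.mem_cons.mp he with rfl | he
      · exact syll_zpow hx (by rw [zpow_neg]; simpa using hc)
      · exact hrred.1 e he
    have hWprod : (x ^ (-(a + 1)) :: r).prod = altProd (x ^ a) (y ^ b) m := by
      rw [List.prod_cons, hrprod, zpow_neg, inv_mul_cancel_left]
    have hlb : m ≤ sylLen X (x ^ (a + 1) * altProd (x ^ a) (y ^ b) m) + 1 := by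
      have h1 := sylLen_le hWsyl hWprod
      rw [hlen] at h1
      simp [hrlen] at h1
      omega
    rcases (show sylLen X (x ^ (a + 1) * altProd (x ^ a) (y ^ b) m) = m - 1 ∨
        sylLen X (x ^ (a + 1) * altProd (x ^ a) (y ^ b) m) = m by omega) with hcase | hcase
    · exfalso
      have hWred : Reduced X (x ^ (-(a + 1)) :: r) := by
        refine mk_reduced hWsyl hWprod ?_
        rw [hlen]
        simp [hrlen, hcase]
        omega
      rcases redg hPD hx hy ha hb hm halt hlen hWred hWprod with hW | hW
      · rw [hw_cons] at hW
        have heq : x ^ (-(a + 1)) = x ^ a := by injection hW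
        have h2 := hpowinj heq
        rw [show -(a + 1) - a = -(a + a + 1) by ring, zpow_neg, inv_eq_one, hxexp,
          zpow_one] at h2
        exact hx1 h2
      · rw [hw'_cons] at hW
        have heq : x ^ (-(a + 1)) = y ^ b := by injection hW
        exact F1c hSM hx hy hxy (α := -(a + 1)) (β := b)
          (by rw [zpow_neg]; simpa using hc) hb heq
    · exact hcase
  have hw₄red : Reduced X (x :: altList (y ^ b) (x ^ a) (m - 1)) := by
    refine mk_reduced hw₄syl hw₄prod ?_
    rw [hCG]
    simp [altList_length]
    omega
  have hnoflip_w₄ : ∀ z₂, MOpII X (x :: altList (y ^ b) (x ^ a) (m - 1)) z₂ → False := by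
    intro z₂ hop
    have hz₂red := reduced_flip hw₄red hop
    obtain ⟨w₁, w₂, s', t', k, hs', ht', hk2, hcomm, hklen, heqq, heq'⟩ := hop
    have heq2 : [x] ++ altList (y ^ b) (x ^ a) (m - 1) ++ ([] : List G) =
        w₁ ++ (altList s' t' k ++ w₂) := by
      rw [List.append_nil, List.singleton_append, heqq, List.append_assoc]
    rcases segloc (show 3 ≤ m - 1 by omega) hk2
        (Or.inr ⟨x, rfl, hxt, hxs⟩) (Or.inl rfl) heq2 with
      ⟨hHnil, _⟩ | ⟨_, w₁', w₂', e₁, e₂, hdec, hpair⟩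
    · simp at hHnil
    · have hz₂dec : z₂ = w₁' ++ ([e₁, e₂] ++ w₂') := by
        rw [heq', List.append_assoc, hdec]
      rcases hpair with ⟨he, hev⟩ | ⟨h0, hH0, he₁, he₂⟩ | ⟨tl, hT0, _⟩
      · subst he
        rcases hev with rfl | rfl
        · exact noadj_case hPD hz₂red hz₂dec ht ht (pow_merge hy b b)
        · exact noadj_case hPD hz₂red hz₂dec hs hs (pow_merge hx a a)
      · have hh0 : x = h0 := by injection hH0
        subst he₁; subst he₂
        rw [← hh0] at hz₂dec
        refine noadj_case hPD hz₂red hz₂dec hsx hs (Or.inl ?_)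
        rw [hss3]
        exact hcX
      · simp at hT0
  -- refutation of xt = tx
  have hSL8 : ¬ (x * y ^ b = y ^ b * x) := by
    intro hco
    have hcost : x ^ a * y ^ b = y ^ b * x ^ a :=
      ((show Commute x (y ^ b) from hco).zpow_left a).eq
    have key : ∀ j : ℕ, altProd (x ^ a) (y ^ b) (j + j) = 1 ∨
        altProd (x ^ a) (y ^ b) (j + j) = x ^ a * y ^ b := by
      intro j
      induction j with
      | zero => exact Or.inl rfl
      | succ j ih =>
        have hstep : altProd (x ^ a) (y ^ b) (j + 1 + (j + 1)) =
            x ^ a * (y ^ b * altProd (x ^ a) (y ^ b) (j + j)) := by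
          rw [show j + 1 + (j + 1) = (j + j) + 1 + 1 by omega, altProd_cons, altProd_cons]
        rcases ih with h | h
        · right
          rw [hstep, h, mul_one]
        · left
          rw [hstep, h]
          calc x ^ a * (y ^ b * (x ^ a * y ^ b))
              = x ^ a * ((y ^ b * x ^ a) * y ^ b) := by rw [mul_assoc]
            _ = x ^ a * ((x ^ a * y ^ b) * y ^ b) := by rw [← hcost]
            _ = (x ^ a * x ^ a) * (y ^ b * y ^ b) := by group
            _ = 1 := by rw [hs2, ht2, one_mul]
    obtain ⟨j, hj⟩ := hme
    rcases key j with h | h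
    · have h1 : sylLen X (altProd (x ^ a) (y ^ b) m) ≤ 0 := by
        refine sylLen_le (v := []) (fun e he => absurd he List.not_mem_nil) ?_
        rw [List.prod_nil, hj]
        exact h.symm
      omega
    · have h1 : sylLen X (altProd (x ^ a) (y ^ b) m) ≤ 2 := by
        refine le_trans (sylLen_le (v := [x ^ a, y ^ b]) ?_ ?_) (by simp)
        · intro e he
          rcases List.mem_cons.mp he with rfl | he
          · exact hs
          · simp at he
            subst he
            exact ht
        · rw [hj]
          simp [h]
      omega
  -- refutation of c t = t c
  have hSL7 : ¬ (x ^ (a + 1) * y ^ b = y ^ b * x ^ (a + 1)) := by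
    intro hE1
    have hcomm_g : x ^ (a + 1) * altProd (x ^ a) (y ^ b) m =
        altProd (x ^ a) (y ^ b) m * x ^ (a + 1) := by
      have hco : Commute (x ^ (a + 1)) ((altList (x ^ a) (y ^ b) m).prod) := by
        refine Commute.list_prod_right _ _ ?_
        intro e he
        rcases mem_altList he with rfl | rfl
        · exact (Commute.refl x).zpow_zpow (a + 1) a
        · exact hE1
      exact hco.eq
    have hw₅syl : SylWord X (altList (y ^ b) (x ^ a) (m - 1) ++ [x]) :=
      sylword_append (sylword_altList ht hs _) (sylword_single hsx)
    have hw₅prod : (altList (y ^ b) (x ^ a) (m - 1) ++ [x]).prod =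
        x ^ (a + 1) * altProd (x ^ a) (y ^ b) m := by
      rw [List.prod_append, List.prod_singleton]
      show altProd (y ^ b) (x ^ a) (m - 1) * x = _
      rw [hLPx, ← hcomm_g]
    have hw₅red : Reduced X (altList (y ^ b) (x ^ a) (m - 1) ++ [x]) := by
      refine mk_reduced hw₅syl hw₅prod ?_
      rw [hCG]
      simp [altList_length]
      omega
    have heqw := unique_of_noflip hPD hw₄red hnoflip_w₄ hw₅red
      (by rw [hw₅prod, hw₄prod])
    have hw₅cons : altList (y ^ b) (x ^ a) (m - 1) ++ [x] =
        y ^ b :: (altList (x ^ a) (y ^ b) (m - 2) ++ [x]) := by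
      conv_lhs => rw [show m - 1 = (m - 2) + 1 by omega, altList_cons]
      simp
    rw [hw₅cons] at heqw
    have : y ^ b = x := by injection heqw
    exact hxt this.symm
  -- the element R = x g x⁻¹ and the two words A' B'
  have hA'syl : SylWord X (x ^ (a + 1) :: (altList (y ^ b) (x ^ a) (m - 1) ++ [x⁻¹])) := by
    intro e he
    rcases List.mem_cons.mp he with rfl | he
    · exact hcX
    · exact sylword_append (sylword_altList ht hs _) (sylword_single hsxinv) e he
  have hA'prod : (x ^ (a + 1) :: (altList (y ^ b) (x ^ a) (m - 1) ++ [x⁻¹])).prod =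
      x * altProd (x ^ a) (y ^ b) m * x⁻¹ := by
    rw [List.prod_cons, List.prod_append, List.prod_singleton, ← mul_assoc]
    show x ^ (a + 1) * altProd (y ^ b) (x ^ a) (m - 1) * x⁻¹ = _
    rw [hcLP]
  have hB'syl : SylWord X (x :: (altList (y ^ b) (x ^ a) (m - 1) ++ [x ^ (a - 1)])) := by
    intro e he
    rcases List.mem_cons.mp he with rfl | he
    · exact hsx
    · exact hv₂syl e he
  have hB'prod : (x :: (altList (y ^ b) (x ^ a) (m - 1) ++ [x ^ (a - 1)])).prod =
      x * altProd (x ^ a) (y ^ b) m * x⁻¹ := by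
    rw [List.prod_cons, hv₂prod, ← mul_assoc]
  -- bounds on sylLen R
  have hRub : sylLen X (x * altProd (x ^ a) (y ^ b) m * x⁻¹) ≤ m + 1 := by
    have h1 := sylLen_le hA'syl hA'prod
    simp [altList_length] at h1
    omega
  have hRlb : m - 1 ≤ sylLen X (x * altProd (x ^ a) (y ^ b) m * x⁻¹) := by
    obtain ⟨r, hrred, hrprod, hrlen⟩ := exists_reduced hA'syl hA'prod
    have hWsyl : SylWord X (r ++ [x]) := sylword_append hrred.1 (sylword_single hsx)
    have hWprod : (r ++ [x]).prod = x * altProd (x ^ a) (y ^ b) m := by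
      rw [List.prod_append, List.prod_singleton, hrprod]
      group
    have h1 := sylLen_le hWsyl hWprod
    rw [hXG] at h1
    simp [hrlen] at h1
    omega
  rcases (show sylLen X (x * altProd (x ^ a) (y ^ b) m * x⁻¹) = m - 1 ∨
      sylLen X (x * altProd (x ^ a) (y ^ b) m * x⁻¹) = m ∨
      sylLen X (x * altProd (x ^ a) (y ^ b) m * x⁻¹) = m + 1 by omega) with
    hcR | hcR | hcR
  · -- sylLen R = m - 1 : contradiction via v₂''
    obtain ⟨r, hrred, hrprod, hrlen⟩ := exists_reduced hA'syl hA'prod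
    have hWsyl : SylWord X (x⁻¹ :: r) := by
      intro e he
      rcases List.mem_cons.mp he with rfl | he
      · exact hsxinv
      · exact hrred.1 e he
    have hWprod : (x⁻¹ :: r).prod = altProd (x ^ a) (y ^ b) m * x⁻¹ := by
      rw [List.prod_cons, hrprod]
      group
    have hWred : Reduced X (x⁻¹ :: r) := by
      refine mk_reduced hWsyl hWprod ?_
      rw [hGX]
      simp [hrlen, hcR]
      omega
    have heqW := unique_of_noflip hPD hv₂red hnoflip_v₂ hWred (by rw [hWprod, hv₂prod])
    have hv₂cons : altList (y ^ b) (x ^ a) (m - 1) ++ [x ^ (a - 1)] =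
        y ^ b :: (altList (x ^ a) (y ^ b) (m - 2) ++ [x ^ (a - 1)]) := by
      conv_lhs => rw [show m - 1 = (m - 2) + 1 by omega, altList_cons]
      simp
    rw [hv₂cons] at heqW
    have : x⁻¹ = y ^ b := by injection heqW
    exact hxit this
  · -- sylLen R = m : use the shortening chain on A'
    have hA'notred : ¬ Reduced X (x ^ (a + 1) :: (altList (y ^ b) (x ^ a) (m - 1) ++ [x⁻¹])) := by
      intro h
      have h2 := h.2
      rw [hA'prod, hcR] at h2
      simp [altList_length] at h2
      omega
    have hnM : ¬ MReduced X (x ^ (a + 1) :: (altList (y ^ b) (x ^ a) (m - 1) ++ [x⁻¹])) :=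
      fun h => hA'notred ((hPD.1 _ hA'syl).mpr h)
    rw [MReduced] at hnM
    push_neg at hnM
    obtain ⟨z, hchain, hlt⟩ := hnM
    rcases Relation.ReflTransGen.cases_head hchain with heqz | ⟨z₁, hstep, _⟩
    · rw [← heqz] at hlt
      omega
    · rcases hstep with hopI | hopII
      · -- type I operation impossible on A'
        obtain ⟨w₁, w₂, α, β, hα, hβ, heqI, hcase⟩ := hopI
        have hαβ : α * β ∈ Syll X ∨ α * β = 1 := by
          rcases hcase with ⟨h, _⟩ | ⟨h, _⟩
          · exact Or.inl h
          · exact Or.inr h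
        have heqI' : [x ^ (a + 1)] ++ altList (y ^ b) (x ^ a) (m - 1) ++ [x⁻¹] =
            w₁ ++ ([α, β] ++ w₂) := by
          rw [List.singleton_append, List.cons_append, heqI, List.append_assoc]
        rcases adjloc (show 2 ≤ m - 1 by omega) hxit hxis heqI' with
          ⟨hα', hβ'⟩ | (⟨hα', hβ'⟩ | ⟨hα', hβ'⟩) | ⟨hα', hβ'⟩
        · subst hα'; subst hβ'
          exact F1a hSM hx hy hxy hc hb hαβ
        · subst hα'; subst hβ'
          exact F1a hSM hy hx (Ne.symm hxy) hb ha hαβ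
        · subst hα'; subst hβ'
          exact F1a hSM hx hy hxy ha hb hαβ
        · rw [if_neg hm1e] at hα'
          subst hα'; subst hβ'
          refine F1a hSM hy hx (Ne.symm hxy) hb (α := b) (β := -1)
            (by rw [← hxinv1]; exact hxinvne) ?_
          rw [← hxinv1]
          exact hαβ
      · -- type II operation on A' forces a refuted commutation
        obtain ⟨w₁, w₂, s', t', k, hs', ht', hk2, hcomm, hklen, heqq, heq'⟩ := hopII
        have heq2 : [x ^ (a + 1)] ++ altList (y ^ b) (x ^ a) (m - 1) ++ [x⁻¹] =
            w₁ ++ (altList s' t' k ++ w₂) := by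
          rw [List.singleton_append, List.cons_append, heqq, List.append_assoc]
        rcases segloc (show 3 ≤ m - 1 by omega) hk2
            (Or.inr ⟨x ^ (a + 1), rfl, hct, hcs⟩)
            (Or.inr ⟨x⁻¹, rfl, hxit, hxis⟩) heq2 with
          ⟨hHnil, _⟩ | ⟨hdata, _⟩
        · simp at hHnil
        · rcases hdata with ⟨hst, hkN⟩ | ⟨h0, hH0, hk2', hs'h, ht'u⟩ | ⟨tl, hT0, hk2', hs'v, ht'tl⟩
          · rcases hst with ⟨hsu, htv⟩ | ⟨hsv, htu⟩
            · rw [hsu, htv] at hcomm hklen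
              refine lemC hPD hx hy ha hb hm halt hlen (k := k) hk2 (by omega) hcomm.symm ?_
              rw [← hcomm]
              exact hklen
            · rw [hsv, htu] at hcomm hklen
              exact lemC hPD hx hy ha hb hm halt hlen (k := k) hk2 (by omega) hcomm hklen
          · have hh0 : x ^ (a + 1) = h0 := by injection hH0
            rw [← hh0] at hs'h
            rw [hs'h, ht'u, hk2'] at hcomm
            rw [altProd_two, altProd_two] at hcomm
            exact hSL7 hcomm
          · have htl : x⁻¹ = tl := by injection hT0
            rw [if_neg hm1e] at hs'v
            rw [hs'v, ht'tl, ← htl, hk2'] at hcomm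
            rw [altProd_two, altProd_two] at hcomm
            apply hSL8
            have hco : Commute (y ^ b) x⁻¹ := hcomm
            have hco2 : Commute x (y ^ b) := by
              have := hco.symm.inv_left
              simpa using this
            exact hco2.eq
  · -- sylLen R = m + 1 : A' and B' both reduced, property D forces an impossible flip
    have hA'red : Reduced X (x ^ (a + 1) :: (altList (y ^ b) (x ^ a) (m - 1) ++ [x⁻¹])) := by
      refine mk_reduced hA'syl hA'prod ?_
      rw [hcR]
      simp [altList_length]
      omega
    have hB'red : Reduced X (x :: (altList (y ^ b) (x ^ a) (m - 1) ++ [x ^ (a - 1)])) := by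
      refine mk_reduced hB'syl hB'prod ?_
      rw [hcR]
      simp [altList_length]
      omega
    have hne : (x ^ (a + 1) :: (altList (y ^ b) (x ^ a) (m - 1) ++ [x⁻¹])) ≠
        (x :: (altList (y ^ b) (x ^ a) (m - 1) ++ [x ^ (a - 1)])) := by
      intro h
      have hcx : x ^ (a + 1) = x := by injection h
      apply ha
      have h2 := hpowinj (hcx.trans (zpow_one x).symm)
      rwa [show a + 1 - 1 = a by ring] at h2
    have hchain := hPD.2 _ _ hA'red hB'red (by rw [hA'prod, hB'prod])
    rcases Relation.ReflTransGen.cases_head hchain with heqz | ⟨z₂, hop, _⟩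
    · exact hne heqz
    · have hz₂red := reduced_flip hA'red hop
      obtain ⟨w₁, w₂, s', t', k, hs', ht', hk2, hcomm, hklen, heqq, heq'⟩ := hop
      have heq2 : [x ^ (a + 1)] ++ altList (y ^ b) (x ^ a) (m - 1) ++ [x⁻¹] =
          w₁ ++ (altList s' t' k ++ w₂) := by
        rw [List.singleton_append, List.cons_append, heqq, List.append_assoc]
      rcases segloc (show 3 ≤ m - 1 by omega) hk2
          (Or.inr ⟨x ^ (a + 1), rfl, hct, hcs⟩)
          (Or.inr ⟨x⁻¹, rfl, hxit, hxis⟩) heq2 with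
        ⟨hHnil, _⟩ | ⟨_, w₁', w₂', e₁, e₂, hdec, hpair⟩
      · simp at hHnil
      · have hz₂dec : z₂ = w₁' ++ ([e₁, e₂] ++ w₂') := by
          rw [heq', List.append_assoc, hdec]
        rcases hpair with ⟨he, hev⟩ | ⟨h0, hH0, he₁, he₂⟩ | ⟨tl, hT0, he₁, he₂⟩
        · subst he
          rcases hev with rfl | rfl
          · exact noadj_case hPD hz₂red hz₂dec ht ht (pow_merge hy b b)
          · exact noadj_case hPD hz₂red hz₂dec hs hs (pow_merge hx a a)
        · have hh0 : x ^ (a + 1) = h0 := by injection hH0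
          subst he₁; subst he₂
          rw [← hh0] at hz₂dec
          exact noadj_case hPD hz₂red hz₂dec hcX hs (pow_merge hx (a + 1) a)
        · have htl : x⁻¹ = tl := by injection hT0
          subst he₁; subst he₂
          rw [← htl, if_neg hm1e] at hz₂dec
          refine noadj_case hPD hz₂red hz₂dec hs hsxinv ?_
          rw [hxinv1]
          exact pow_merge hx a (-1)

end Step2

theorem statement_2 {G : Type*} [Group G] {X : Set G}
    (hSM : StronglyMarked X) (hPD : PropertyD X)
    {x y : G} (hx : x ∈ X) (hy : y ∈ X) (hxy : x ≠ y)
    {a b : ℤ} (ha : x ^ a ≠ 1) (hb : y ^ b ≠ 1)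
    {m : ℕ} (hm : 3 ≤ m) (hmeven : Even m) (hnc : x * y ≠ y * x)
    (halt : altProd (x ^ a) (y ^ b) m = altProd (y ^ b) (x ^ a) m)
    (hlen : sylLen X (altProd (x ^ a) (y ^ b) m) = m) :
    orderOf x = 2 ∧ orderOf y = 2 ∧ a ≡ 1 [ZMOD (2 : ℤ)] ∧ b ≡ 1 [ZMOD (2 : ℤ)] := by
  have halt' : altProd (y ^ b) (x ^ a) m = altProd (x ^ a) (y ^ b) m := halt.symm
  have hlen' : sylLen X (altProd (y ^ b) (x ^ a) m) = m := by rw [← halt]; exact hlen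
  have s2x : x ^ a * x ^ a = 1 := step1 hSM hPD hx hy hxy ha hb hm hmeven halt hlen
  have s2y : y ^ b * y ^ b = 1 :=
    step1 hSM hPD hy hx (Ne.symm hxy) hb ha hm hmeven halt' hlen'
  have c1 : x ^ (a + 1) = 1 := step2 hSM hPD hx hy hxy ha hb hm hmeven halt hlen s2x s2y
  have c2 : y ^ (b + 1) = 1 :=
    step2 hSM hPD hy hx (Ne.symm hxy) hb ha hm hmeven halt' hlen' s2y s2x
  have hx1 : x ≠ 1 := fun h => hSM.2.1 (h ▸ hx)
  have hy1 : y ≠ 1 := fun h => hSM.2.1 (h ▸ hy)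
  have hx2 : x ^ (2 : ℤ) = 1 := by
    have h1 : x ^ (a + a) = 1 := by rw [zpow_add]; exact s2x
    have h2 : (2 : ℤ) = (a + 1) + ((a + 1) + -(a + a)) := by ring
    rw [h2, zpow_add x (a + 1) (a + 1 + -(a + a)), zpow_add x (a + 1) (-(a + a)), zpow_neg, c1, h1]
    simp
  have hy2 : y ^ (2 : ℤ) = 1 := by
    have h1 : y ^ (b + b) = 1 := by rw [zpow_add]; exact s2y
    have h2 : (2 : ℤ) = (b + 1) + ((b + 1) + -(b + b)) := by ring
    rw [h2, zpow_add y (b + 1) (b + 1 + -(b + b)), zpow_add y (b + 1) (-(b + b)), zpow_neg, c2, h1]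
    simp
  have hox : orderOf x = 2 := by
    have hx2' : x ^ (2 : ℕ) = 1 := by
      have := hx2
      rwa [show (2 : ℤ) = ((2 : ℕ) : ℤ) by norm_num, zpow_natCast] at this
    exact orderOf_eq_prime hx2' hx1
  have hoy : orderOf y = 2 := by
    have hy2' : y ^ (2 : ℕ) = 1 := by
      have := hy2
      rwa [show (2 : ℤ) = ((2 : ℕ) : ℤ) by norm_num, zpow_natCast] at this
    exact orderOf_eq_prime hy2' hy1
  have hax : a ≡ 1 [ZMOD (2 : ℤ)] := by
    rcases Int.even_or_odd a with ⟨j, rfl⟩ | hodd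
    · exfalso
      apply ha
      rw [show j + j = 2 * j by ring, zpow_mul, hx2, one_zpow]
    · obtain ⟨j, hj⟩ := hodd
      unfold Int.ModEq
      omega
  have hbx : b ≡ 1 [ZMOD (2 : ℤ)] := by
    rcases Int.even_or_odd b with ⟨j, rfl⟩ | hodd
    · exfalso
      apply hb
      rw [show j + j = 2 * j by ring, zpow_mul, hy2, one_zpow]
    · obtain ⟨j, hj⟩ := hodd
      unfold Int.ModEq
      omega
  exact ⟨hox, hoy, hax, hbx⟩

end Paper
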